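/- Let L ≥ 3 be an integer, λ > 0, and define y* = (((L-2)/L)^{L/(2L-2)} + (L/(L-2))^{(L-2)/(2L-2)}) · λ^{1/(2L-2)}. For y ≥ 0, the equation x^{2L-1} - √λ·y·x^{L-1} + λ·x = 0 has exactly two distinct positive solutions x if y > y*, exactly one positive solution if y = y*, and no positive solution if y < y*. -/

import Mathlib

noncomputable def hfun (L : ℕ) (lam x : ℝ) : ℝ :=
  x ^ L / Real.sqrt lam + Real.sqrt lam * x ^ 2 / x ^ L

lemma mem_S_iff (L : ℕ) (hL : 3 ≤ L) (lam y x : ℝ) (hlam : 0 < lam) (hx : 0 < x) :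
    x ^ (2 * L - 1) - Real.sqrt lam * y * x ^ (L - 1) + lam * x = 0 ↔ hfun L lam x = y := by
  have hs : 0 < Real.sqrt lam := Real.sqrt_pos.2 hlam
  have hs2 : Real.sqrt lam ^ 2 = lam := Real.sq_sqrt hlam.le
  have hxL : x ^ L ≠ 0 := pow_ne_zero _ hx.ne'
  have h1 : x ^ (2 * L - 1) * x = (x ^ L) ^ 2 := by
    rw [← pow_succ, ← pow_mul]; congr 1; omega
  have h2 : x ^ (L - 1) * x = x ^ L := by
    rw [← pow_succ]; congr 1; omega
  rw [hfun]
  constructor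
  · intro h
    have h' : (x ^ L) ^ 2 - Real.sqrt lam * y * x ^ L + lam * x ^ 2 = 0 := by
      have := congrArg (· * x) h
      simp only [sub_mul, add_mul, zero_mul] at this
      rw [mul_assoc, mul_assoc, h2] at this
      rw [← this, h1]; ring
    field_simp
    nlinarith [h']
  · intro h
    have h' : (x ^ L) ^ 2 - Real.sqrt lam * y * x ^ L + lam * x ^ 2 = 0 := by
      field_simp at h
      nlinarith [h]
    have hxne : x ≠ 0 := hx.ne'
    have := congrArg (· * x⁻¹) h'
    simp only [sub_mul, add_mul, zero_mul] at this
    rw [← this]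
    rw [← h1, ← h2]
    field_simp


noncomputable def xst (L : ℕ) (lam : ℝ) : ℝ :=
  (lam * ((L : ℝ) - 2) / L) ^ ((1 : ℝ) / (2 * (L : ℝ) - 2))

lemma deriv_simp (L : ℕ) (hL : 3 ≤ L) (lam x : ℝ) (hlam : 0 < lam) (hx : 0 < x) :
    (L : ℝ) * x ^ (L - 1) / Real.sqrt lam
        + Real.sqrt lam * ((2 * x * x ^ L - x ^ 2 * ((L : ℝ) * x ^ (L - 1))) / (x ^ L) ^ 2)
      = ((L : ℝ) * x ^ (2 * L - 2) - lam * ((L : ℝ) - 2)) / (Real.sqrt lam * x ^ (L - 1)) := by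
  obtain ⟨M, rfl⟩ : ∃ M, L = M + 3 := ⟨L - 3, by omega⟩
  have hs : 0 < Real.sqrt lam := Real.sqrt_pos.2 hlam
  have hs2 : Real.sqrt lam ^ 2 = lam := Real.sq_sqrt hlam.le
  have e1 : M + 3 - 1 = M + 2 := by omega
  have e2 : 2 * (M + 3) - 2 = 2 * M + 4 := by omega
  rw [e1, e2]
  have hxne : x ≠ 0 := hx.ne'
  field_simp
  push_cast
  linear_combination (-(M:ℝ) - 1) * x ^ 6 * x ^ (M * 2) * hs2

lemma hfun_hasDeriv (L : ℕ) (hL : 3 ≤ L) (lam x : ℝ) (hlam : 0 < lam) (hx : 0 < x) :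
    HasDerivAt (hfun L lam)
      (((L : ℝ) * x ^ (2 * L - 2) - lam * ((L : ℝ) - 2)) / (Real.sqrt lam * x ^ (L - 1))) x := by
  rw [← deriv_simp L hL lam x hlam hx]
  have hxL : x ^ L ≠ 0 := pow_ne_zero _ hx.ne'
  have h1 : HasDerivAt (fun x : ℝ => x ^ L / Real.sqrt lam) ((L : ℝ) * x ^ (L - 1) / Real.sqrt lam) x :=
    (hasDerivAt_pow L x).div_const _
  have h2 : HasDerivAt (fun x : ℝ => Real.sqrt lam * x ^ 2 / x ^ L)
      (Real.sqrt lam * ((2 * x * x ^ L - x ^ 2 * ((L : ℝ) * x ^ (L - 1))) / (x ^ L) ^ 2)) x := by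
    have hnum : HasDerivAt (fun x : ℝ => x ^ 2) (2 * x) x := by
      simpa using hasDerivAt_pow 2 x
    have := (hnum.div (hasDerivAt_pow L x) hxL).const_mul (Real.sqrt lam)
    convert this using 1
    · rfl
    · rfl
    · funext y; simp [mul_div_assoc]
  exact h1.add h2

lemma continuousOn_hfun (L : ℕ) (lam : ℝ) :
    ContinuousOn (hfun L lam) (Set.Ioi 0) := by
  apply ContinuousOn.add
  · exact (continuousOn_pow L).div_const _
  · exact ((continuousOn_const.mul (continuousOn_pow 2)).div (continuousOn_pow L))
      (fun x hx => pow_ne_zero _ (ne_of_gt hx))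

lemma c_pos (L : ℕ) (hL : 3 ≤ L) (lam : ℝ) (hlam : 0 < lam) :
    0 < lam * ((L : ℝ) - 2) / L := by
  have h2 : (2 : ℝ) < L := by exact_mod_cast (by omega : 2 < L)
  have hL0 : (0 : ℝ) < L := by positivity
  have : (0:ℝ) < (L:ℝ) - 2 := by linarith
  positivity

lemma xst_pos (L : ℕ) (hL : 3 ≤ L) (lam : ℝ) (hlam : 0 < lam) : 0 < xst L lam :=
  Real.rpow_pos_of_pos (c_pos L hL lam hlam) _

lemma xst_pow (L : ℕ) (hL : 3 ≤ L) (lam : ℝ) (hlam : 0 < lam) :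
    xst L lam ^ (2 * L - 2) = lam * ((L : ℝ) - 2) / L := by
  have hc := c_pos L hL lam hlam
  have hp : ((2 * L - 2 : ℕ) : ℝ) = 2 * (L : ℝ) - 2 := by
    push_cast [Nat.cast_sub (by omega : 2 ≤ 2 * L)]; ring
  rw [xst, ← Real.rpow_natCast ((lam * ((L : ℝ) - 2) / L) ^ ((1:ℝ)/(2*(L:ℝ)-2))) (2*L-2),
    ← Real.rpow_mul hc.le, hp]
  rw [one_div, inv_mul_cancel₀, Real.rpow_one]
  have h3 : (3:ℝ) ≤ (L:ℝ) := by exact_mod_cast hL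
  linarith

lemma hderiv_neg (L : ℕ) (hL : 3 ≤ L) (lam x : ℝ) (hlam : 0 < lam) (hx : 0 < x)
    (hxs : x < xst L lam) :
    ((L : ℝ) * x ^ (2 * L - 2) - lam * ((L : ℝ) - 2)) / (Real.sqrt lam * x ^ (L - 1)) < 0 := by
  have hs : 0 < Real.sqrt lam := Real.sqrt_pos.2 hlam
  have hL0 : (0 : ℝ) < L := by positivity
  have hlt : x ^ (2 * L - 2) < xst L lam ^ (2 * L - 2) :=
    pow_lt_pow_left₀ hxs hx.le (by omega)
  rw [xst_pow L hL lam hlam] at hlt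
  apply div_neg_of_neg_of_pos
  · have := (lt_div_iff₀ hL0).mp hlt
    linarith
  · positivity

lemma hderiv_pos (L : ℕ) (hL : 3 ≤ L) (lam x : ℝ) (hlam : 0 < lam) (hx : 0 < x)
    (hxs : xst L lam < x) :
    0 < ((L : ℝ) * x ^ (2 * L - 2) - lam * ((L : ℝ) - 2)) / (Real.sqrt lam * x ^ (L - 1)) := by
  have hs : 0 < Real.sqrt lam := Real.sqrt_pos.2 hlam
  have hL0 : (0 : ℝ) < L := by positivity
  have hlt : xst L lam ^ (2 * L - 2) < x ^ (2 * L - 2) :=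
    pow_lt_pow_left₀ hxs (xst_pos L hL lam hlam).le (by omega)
  rw [xst_pow L hL lam hlam] at hlt
  apply div_pos
  · have := (div_lt_iff₀ hL0).mp hlt
    linarith
  · positivity

lemma hfun_strictAnti (L : ℕ) (hL : 3 ≤ L) (lam : ℝ) (hlam : 0 < lam) :
    StrictAntiOn (hfun L lam) (Set.Ioc 0 (xst L lam)) := by
  apply strictAntiOn_of_deriv_neg (convex_Ioc _ _)
  · exact (continuousOn_hfun L lam).mono (fun x hx => hx.1)
  · intro x hx
    rw [interior_Ioc] at hx
    rw [(hfun_hasDeriv L hL lam x hlam hx.1).deriv]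
    exact hderiv_neg L hL lam x hlam hx.1 hx.2

lemma hfun_strictMono (L : ℕ) (hL : 3 ≤ L) (lam : ℝ) (hlam : 0 < lam) :
    StrictMonoOn (hfun L lam) (Set.Ici (xst L lam)) := by
  apply strictMonoOn_of_deriv_pos (convex_Ici _)
  · exact (continuousOn_hfun L lam).mono
      (fun x hx => lt_of_lt_of_le (xst_pos L hL lam hlam) hx)
  · intro x hx
    rw [interior_Ici] at hx
    rw [(hfun_hasDeriv L hL lam x hlam ((xst_pos L hL lam hlam).trans hx)).deriv]
    exact hderiv_pos L hL lam x hlam ((xst_pos L hL lam hlam).trans hx) hx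


lemma hfun_xst (L : ℕ) (hL : 3 ≤ L) (lam : ℝ) (hlam : 0 < lam) :
    hfun L lam (xst L lam)
      = ((((L : ℝ) - 2) / L) ^ ((L : ℝ) / (2 * (L : ℝ) - 2))
        + ((L : ℝ) / ((L : ℝ) - 2)) ^ (((L : ℝ) - 2) / (2 * (L : ℝ) - 2)))
        * lam ^ ((1 : ℝ) / (2 * (L : ℝ) - 2)) := by
  have hLr : (3:ℝ) ≤ (L:ℝ) := by exact_mod_cast hL
  set p := 2*(L:ℝ)-2 with hp
  have hppos : 0 < p := by rw [hp]; linarith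
  set c := lam*((L:ℝ)-2)/L with hcdef
  have hc : 0 < c := c_pos L hL lam hlam
  have hr : (0:ℝ) < ((L:ℝ)-2)/L := by
    have h0 : (0:ℝ) < (L:ℝ) := by linarith
    apply div_pos <;> linarith
  have key : ∀ n : ℕ, (xst L lam)^n = c ^ ((n:ℝ)/p) := by
    intro n
    rw [xst, ← hcdef, ← hp, ← Real.rpow_natCast (c ^ ((1:ℝ)/p)) n, ← Real.rpow_mul hc.le]
    congr 1
    field_simp
  have hsq : Real.sqrt lam = lam ^ ((1:ℝ)/2) := Real.sqrt_eq_rpow lam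
  have hcm : ∀ t : ℝ, c ^ t = (((L:ℝ)-2)/L) ^ t * lam ^ t := by
    intro t
    rw [show c = (((L:ℝ)-2)/L) * lam by rw [hcdef]; ring, Real.mul_rpow hr.le hlam.le]
  have hne : 2*(L:ℝ)-2 ≠ 0 := by rw [← hp]; exact hppos.ne'
  have he1 : (L:ℝ)/p - 1/2 = 1/p := by
    have hL1 : (L:ℝ) - 1 ≠ 0 := by linarith
    rw [hp]; field_simp; ring
  have he2 : 1/2 + -(((L:ℝ)-2)/p) = 1/p := by
    have hL1 : (L:ℝ) - 1 ≠ 0 := by linarith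
    rw [hp]; field_simp; ring
  have t1 : c ^ ((L:ℝ)/p) / lam ^ ((1:ℝ)/2)
      = (((L:ℝ)-2)/L) ^ ((L:ℝ)/p) * lam ^ ((1:ℝ)/p) := by
    rw [hcm, mul_div_assoc, ← Real.rpow_sub hlam, he1]
  have t2 : lam ^ ((1:ℝ)/2) * c ^ ((2:ℝ)/p) / c ^ ((L:ℝ)/p)
      = ((L:ℝ)/((L:ℝ)-2)) ^ (((L:ℝ)-2)/p) * lam ^ ((1:ℝ)/p) := by
    rw [mul_div_assoc, ← Real.rpow_sub hc,
      show (2:ℝ)/p - (L:ℝ)/p = -((((L:ℝ)-2))/p) by ring,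
      Real.rpow_neg hc.le, hcm, mul_inv, ← Real.inv_rpow hr.le, inv_div,
      ← Real.rpow_neg hlam.le, mul_comm (((L:ℝ)/((L:ℝ)-2)) ^ (((L:ℝ)-2)/p)) _,
      ← mul_assoc, ← Real.rpow_add hlam, he2]
    rw [mul_comm]
  have e2 : ((2:ℕ):ℝ) = 2 := by norm_num
  rw [hfun, key, key, hsq, e2, t1, t2]
  ring


lemma hfun_pos (L : ℕ) (lam x : ℝ) (hlam : 0 < lam) (hx : 0 < x) : 0 < hfun L lam x := by
  have hs : 0 < Real.sqrt lam := Real.sqrt_pos.2 hlam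
  have h1 : 0 < x ^ L := pow_pos hx L
  rw [hfun]; positivity

lemma exists_left (L : ℕ) (hL : 3 ≤ L) (lam y xs : ℝ) (hlam : 0 < lam) (hxs : 0 < xs)
    (hy0 : 0 < y) (hy : hfun L lam xs < y) :
    ∃ a, 0 < a ∧ a < xs ∧ hfun L lam a = y := by
  have hs : 0 < Real.sqrt lam := Real.sqrt_pos.2 hlam
  set s := Real.sqrt lam with hsdef
  set x0 := min (xs/2) (min 1 (s/(y+1))) with hx0def
  have hx0pos : 0 < x0 := by
    apply lt_min (by linarith) (lt_min one_pos (by positivity))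
  have hx0lt : x0 < xs := lt_of_le_of_lt (min_le_left _ _) (by linarith)
  have hx0le1 : x0 ≤ 1 := le_trans (min_le_right _ _) (min_le_left _ _)
  have hx0les : x0 ≤ s/(y+1) := le_trans (min_le_right _ _) (min_le_right _ _)
  have hbig : y < hfun L lam x0 := by
    have hterm : s * x0 ^ 2 / x0 ^ L = s / x0 ^ (L - 2) := by
      rw [show L = 2 + (L - 2) by omega, pow_add]
      field_simp
      rw [Nat.add_sub_cancel_left]
    have hpowle : x0 ^ (L - 2) ≤ x0 := by
      calc x0 ^ (L - 2) ≤ x0 ^ 1 := pow_le_pow_of_le_one hx0pos.le hx0le1 (by omega)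
        _ = x0 := pow_one x0
    have h1 : y + 1 ≤ s / x0 := by
      rw [le_div_iff₀ hx0pos]
      calc (y+1) * x0 ≤ (y+1) * (s/(y+1)) := by
            apply mul_le_mul_of_nonneg_left hx0les (by linarith)
        _ = s := by field_simp
    have h2 : s / x0 ≤ s / x0 ^ (L - 2) :=
      div_le_div_of_nonneg_left hs.le (pow_pos hx0pos _) hpowle
    have h3 : 0 < x0 ^ L / s := by positivity
    calc y < y + 1 := by linarith
      _ ≤ s / x0 ^ (L - 2) := h1.trans h2
      _ = s * x0 ^ 2 / x0 ^ L := hterm.symm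
      _ ≤ hfun L lam x0 := by rw [hfun]; linarith
  have hcont : ContinuousOn (hfun L lam) (Set.Icc x0 xs) := by
    apply ContinuousOn.add
    · exact (continuousOn_pow L).div_const _
    · exact ((continuousOn_const.mul (continuousOn_pow 2)).div (continuousOn_pow L))
        (fun x hx => pow_ne_zero _ (by nlinarith [hx.1] : (0:ℝ) < x).ne')
  have := intermediate_value_Icc' hx0lt.le hcont
  have hmem : y ∈ Set.Icc (hfun L lam xs) (hfun L lam x0) := ⟨hy.le, hbig.le⟩
  obtain ⟨a, ha, hav⟩ := this hmem
  refine ⟨a, lt_of_lt_of_le hx0pos ha.1, lt_of_le_of_ne ha.2 ?_, hav⟩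
  intro h; rw [h] at hav; exact absurd hav (by linarith)

lemma exists_right (L : ℕ) (hL : 3 ≤ L) (lam y xs : ℝ) (hlam : 0 < lam) (hxs : 0 < xs)
    (hy0 : 0 < y) (hy : hfun L lam xs < y) :
    ∃ b, xs < b ∧ hfun L lam b = y := by
  have hs : 0 < Real.sqrt lam := Real.sqrt_pos.2 hlam
  set s := Real.sqrt lam with hsdef
  set x1 := max (2*xs) (max 1 (s*(y+1))) with hx1def
  have hx1gt : xs < x1 := lt_of_lt_of_le (by linarith) (le_max_left _ _)
  have hx1pos : 0 < x1 := hxs.trans hx1gt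
  have hx1ge1 : 1 ≤ x1 := le_trans (le_max_left _ _) (le_max_right _ _)
  have hx1ges : s*(y+1) ≤ x1 := le_trans (le_max_right _ _) (le_max_right _ _)
  have hbig : y < hfun L lam x1 := by
    have hpowge : x1 ≤ x1 ^ L := by
      calc x1 = x1 ^ 1 := (pow_one x1).symm
        _ ≤ x1 ^ L := pow_le_pow_right₀ hx1ge1 (by omega)
    have h1 : y + 1 ≤ x1 / s := by
      rw [le_div_iff₀ hs]
      linarith [hx1ges]
    have h2 : x1 / s ≤ x1 ^ L / s := div_le_div_of_nonneg_right hpowge hs.le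
    have h3 : 0 < s * x1 ^ 2 / x1 ^ L := by positivity
    calc y < y + 1 := by linarith
      _ ≤ x1 ^ L / s := h1.trans h2
      _ ≤ hfun L lam x1 := by rw [hfun]; linarith
  have hcont : ContinuousOn (hfun L lam) (Set.Icc xs x1) := by
    apply ContinuousOn.add
    · exact (continuousOn_pow L).div_const _
    · exact ((continuousOn_const.mul (continuousOn_pow 2)).div (continuousOn_pow L))
        (fun x hx => pow_ne_zero _ (lt_of_lt_of_le hxs hx.1).ne')
  have := intermediate_value_Icc hx1gt.le hcont
  have hmem : y ∈ Set.Icc (hfun L lam xs) (hfun L lam x1) := ⟨hy.le, hbig.le⟩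
  obtain ⟨b, hb, hbv⟩ := this hmem
  refine ⟨b, lt_of_le_of_ne hb.1 ?_, hbv⟩
  intro h; rw [← h] at hbv; exact absurd hbv (by linarith)


/-- For `y ≥ 0`, the equation `x^(2L-1) - √λ y x^(L-1) + λ x = 0` has exactly two distinct
positive solutions if `y > y*`, exactly one if `y = y*`, and none if `y < y*`. -/
theorem stmt_4 (L : ℕ) (hL : 3 ≤ L) (lam y : ℝ) (hlam : 0 < lam) (hy : 0 ≤ y) :
    let ystar : ℝ := ((((L : ℝ) - 2) / L) ^ ((L : ℝ) / (2 * (L : ℝ) - 2))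
        + ((L : ℝ) / ((L : ℝ) - 2)) ^ (((L : ℝ) - 2) / (2 * (L : ℝ) - 2)))
        * lam ^ ((1 : ℝ) / (2 * (L : ℝ) - 2))
    let S : Set ℝ :=
      {x : ℝ | 0 < x ∧ x ^ (2 * L - 1) - Real.sqrt lam * y * x ^ (L - 1) + lam * x = 0}
    (ystar < y → ∃ a b : ℝ, a ≠ b ∧ S = {a, b}) ∧
      (y = ystar → ∃ a : ℝ, S = {a}) ∧
      (y < ystar → S = ∅) := by
  intro ystar S
  set xs := xst L lam with hxsdef
  have hxs : 0 < xs := xst_pos L hL lam hlam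
  have hystar : hfun L lam xs = ystar := hfun_xst L hL lam hlam
  have hympos : 0 < ystar := hystar ▸ hfun_pos L lam xs hlam hxs
  have hSeq : S = {x : ℝ | 0 < x ∧ hfun L lam x = y} := by
    ext x
    exact and_congr_right (fun hx => mem_S_iff L hL lam y x hlam hx)
  have hmin : ∀ x : ℝ, 0 < x → hfun L lam xs ≤ hfun L lam x := by
    intro x hx
    rcases lt_trichotomy x xs with h | h | h
    · exact (hfun_strictAnti L hL lam hlam ⟨hx, h.le⟩ ⟨hxs, le_refl _⟩ h).le
    · rw [h]
    · exact (hfun_strictMono L hL lam hlam (Set.self_mem_Ici) (Set.mem_Ici.2 h.le) h).le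
  refine ⟨?_, ?_, ?_⟩
  · -- two solutions
    intro hgt
    rw [← hystar] at hgt
    have hy0 : 0 < y := hympos.trans (hystar ▸ hgt)
    obtain ⟨a, ha0, haxs, hav⟩ := exists_left L hL lam y xs hlam hxs hy0 hgt
    obtain ⟨b, hbxs, hbv⟩ := exists_right L hL lam y xs hlam hxs hy0 hgt
    refine ⟨a, b, (haxs.trans hbxs).ne, ?_⟩
    rw [hSeq]
    ext x
    simp only [Set.mem_setOf_eq, Set.mem_insert_iff, Set.mem_singleton_iff]
    constructor
    · rintro ⟨hx, hxv⟩
      rcases le_or_gt x xs with h | h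
      · left
        exact (hfun_strictAnti L hL lam hlam).injOn ⟨hx, h⟩ ⟨ha0, haxs.le⟩
          (by rw [hxv, hav])
      · right
        exact (hfun_strictMono L hL lam hlam).injOn (Set.mem_Ici.2 h.le)
          (Set.mem_Ici.2 hbxs.le) (by rw [hxv, hbv])
    · rintro (rfl | rfl)
      · exact ⟨ha0, hav⟩
      · exact ⟨hxs.trans hbxs, hbv⟩
  · -- one solution
    intro heq
    refine ⟨xs, ?_⟩
    rw [hSeq]
    ext x
    simp only [Set.mem_setOf_eq, Set.mem_singleton_iff]
    constructor
    · rintro ⟨hx, hxv⟩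
      by_contra hne
      rcases lt_or_gt_of_ne hne with h | h
      · have := hfun_strictAnti L hL lam hlam ⟨hx, h.le⟩ ⟨hxs, le_refl _⟩ h
        rw [hxv, hystar, ← heq] at this
        exact lt_irrefl _ this
      · have := hfun_strictMono L hL lam hlam (Set.self_mem_Ici) (Set.mem_Ici.2 h.le) h
        rw [hxv, hystar, ← heq] at this
        exact lt_irrefl _ this
    · rintro rfl
      exact ⟨hxs, by rw [hystar, heq]⟩
  · -- no solution
    intro hlt
    rw [hSeq]
    ext x
    simp only [Set.mem_setOf_eq, Set.mem_empty_iff_false, iff_false, not_and]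
    intro hx hxv
    have := hmin x hx
    rw [hxv, hystar] at this
    exact absurd hlt (not_lt.2 this)
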